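/- Suppose k ≤ min_{i=1,...,n} deg(min(α_i; F_q)), where min(α_i; F_q) is the minimal polynomial of α_i over F_q and the α_i ∈ F_{q^m} are distinct. Then the nonlinear Reed-Solomon code nRS_q(α⃗, k) has minimum distance d = n, i.e., it meets the Singleton bound d ≤ n − ⌈k/m⌉ + 1. -/

import Mathlib

open Polynomial

/-- If `k ≤ min_i deg (min(αᵢ; F))` with the `αᵢ ∈ K` distinct, then the nonlinear
Reed–Solomon code `nRS_q(α⃗, k)` has minimum distance `n`: every nonzero codeword has
no zero coordinate (so it meets the Singleton bound `d ≤ n - ⌈k/m⌉ + 1`). -/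
theorem stmt1 {F K : Type*} [Field F] [Field K] [Algebra F K] [Fintype F] [Fintype K]
    (q m n k : ℕ) (hq : IsPrimePow q) (hF : Fintype.card F = q)
    (hK : Fintype.card K = q ^ m) (α : Fin n → K) (hinj : Function.Injective α)
    (hk : ∀ i, k ≤ (minpoly F (α i)).natDegree) :
    ∀ f : F[X], f ≠ 0 → f.degree < k → ∀ i, Polynomial.aeval (α i) f ≠ 0 := by
  intro f hf hdeg i h
  have hfin : FiniteDimensional F K := Module.Finite.of_basis (Module.finBasis F K)
  have hint : IsIntegral F (α i) := Algebra.IsIntegral.isIntegral _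
  have h1 : (minpoly F (α i)).degree ≤ f.degree := minpoly.degree_le_of_ne_zero F (α i) hf h
  have h2 : ((minpoly F (α i)).natDegree : WithBot ℕ) ≤ (minpoly F (α i)).degree :=
    le_of_eq (Polynomial.degree_eq_natDegree (minpoly.ne_zero hint)).symm
  have h3 : ((k : WithBot ℕ)) ≤ (minpoly F (α i)).natDegree := by exact_mod_cast hk i
  exact absurd hdeg (not_lt.mpr (le_trans (le_trans h3 h2) h1))
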